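/- Every word in a flat language of the form w₁·w₂^*·w₃·⋯ has, for each fixed pattern, the property that any two words u, v readable as loops at the same position are powers of a common word. Concretely: in the language s·α^*·p (s a suffix and p a prefix of a word α), any two words u, v with s·α^{k}·u·α^{l}·p and s·α^{k}·v·α^{l}·p both in the language and u, v arising as repetitions of α, are powers of α; hence s·α^*·p contains no butterfly loop p'·{u,v}^*·s' with u, v not powers of a common word. -/
import Mathlib


open Computability

/-- `wpow w n` is the `n`-fold concatenation (iteration) of the word `w`. -/
def wpow {A : Type*} (w : List A) : ℕ → List A
  | 0 => []
  | n + 1 => w ++ wpow w n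

/-- A word is primitive if it cannot be written as `v ^ k` for any `k ≥ 2`. -/
def Primitive {A : Type*} (w : List A) : Prop :=
  ∀ (v : List A) (k : ℕ), 2 ≤ k → w ≠ wpow v k

lemma wpow_add {A : Type*} (w : List A) (m n : ℕ) :
    wpow w (m + n) = wpow w m ++ wpow w n := by
  induction m with
  | zero => simp [wpow]
  | succ m ih => simp [wpow, Nat.succ_add, ih]

lemma wpow_length {A : Type*} (w : List A) (n : ℕ) :
    (wpow w n).length = n * w.length := by
  induction n with
  | zero => simp [wpow]
  | succ n ih => simp [wpow, ih, Nat.succ_mul, Nat.add_comm]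

lemma wpow_nil {A : Type*} (n : ℕ) : wpow ([] : List A) n = [] := by
  induction n with
  | zero => rfl
  | succ n ih => simp [wpow, ih]

lemma comm_pow {A : Type*} : ∀ (N : ℕ) (u v : List A),
    u.length + v.length ≤ N → u ++ v = v ++ u →
    ∃ (w : List A) (i j : ℕ), u = wpow w i ∧ v = wpow w j := by
  intro N
  induction N with
  | zero =>
    intro u v hlen _
    have hu : u = [] := List.eq_nil_of_length_eq_zero (by omega)
    have hv : v = [] := List.eq_nil_of_length_eq_zero (by omega)
    exact ⟨[], 0, 0, by simp [hu, wpow], by simp [hv, wpow]⟩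
  | succ N ih =>
    intro u v hlen hcomm
    rcases eq_or_ne u [] with hu | hu
    · exact ⟨v, 0, 1, by simp [hu, wpow], by simp [wpow]⟩
    rcases eq_or_ne v [] with hv | hv
    · exact ⟨u, 1, 0, by simp [wpow], by simp [hv, wpow]⟩
    rcases le_total u.length v.length with hle | hle
    · -- u is a prefix of v
      have hpre : u <+: v := by
        have : u <+: u ++ v := List.prefix_append u v
        rw [hcomm] at this
        exact (List.prefix_of_prefix_length_le this (List.prefix_append v u) hle)
      obtain ⟨t, ht⟩ := hpre
      subst ht
      have hcomm' : u ++ t = t ++ u := by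
        have : u ++ (u ++ t) = (u ++ t) ++ u := hcomm
        simpa [List.append_assoc, List.append_cancel_left_eq] using this
      have hlen' : u.length + t.length ≤ N := by
        have hul : 1 ≤ u.length := by
          cases u with
          | nil => exact absurd rfl hu
          | cons a l => simp
        have : u.length + (u.length + t.length) ≤ N + 1 := by
          simpa [List.length_append] using hlen
        omega
      obtain ⟨w, i, j, hwu, hwt⟩ := ih u t hlen' hcomm'
      exact ⟨w, i, i + j, hwu, by rw [wpow_add, hwu, hwt]⟩
    · -- v is a prefix of u
      have hpre : v <+: u := by
        have : v <+: v ++ u := List.prefix_append v u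
        rw [← hcomm] at this
        exact (List.prefix_of_prefix_length_le this (List.prefix_append u v) hle)
      obtain ⟨t, ht⟩ := hpre
      subst ht
      have hcomm' : v ++ t = t ++ v := by
        have : (v ++ t) ++ v = v ++ (v ++ t) := hcomm
        have h2 : v ++ (t ++ v) = v ++ (v ++ t) := by
          simpa [List.append_assoc] using this
        exact (List.append_cancel_left h2).symm
      have hlen' : v.length + t.length ≤ N := by
        have hvl : 1 ≤ v.length := by
          cases v with
          | nil => exact absurd rfl hv
          | cons a l => simp
        have : (v.length + t.length) + v.length ≤ N + 1 := by
          simpa [List.length_append] using hlen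
        omega
      obtain ⟨w, i, j, hwv, hwt⟩ := ih v t hlen' hcomm'
      exact ⟨w, i + j, i, by rw [wpow_add, hwv, hwt], hwv⟩

/-- The flat language `s ⬝ α^* ⬝ p` contains no butterfly loop: if
`p' ⬝ {u,v}^* ⬝ s' ⊆ s ⬝ α^* ⬝ p`, then `u` and `v` are powers of a common
word. -/
theorem flat_no_butterfly {A : Type*} (α p s p' s' u v : List A)
    (hsub : ({p'} : Language A) * ({u, v} : Language A)∗ * {s'} ≤
      {w : List A | ∃ n : ℕ, w = s ++ wpow α n ++ p}) :
    ∃ (w : List A) (i j : ℕ), u = wpow w i ∧ v = wpow w j := by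
  have hu : u ∈ ({u, v} : Language A) := by left; rfl
  have hv : v ∈ ({u, v} : Language A) := by right; rfl
  have hmem : ∀ x ∈ ({u, v} : Language A)∗,
      p' ++ x ++ s' ∈ {w : List A | ∃ n : ℕ, w = s ++ wpow α n ++ p} := by
    intro x hx
    apply hsub
    exact Language.append_mem_mul (Language.append_mem_mul rfl hx) rfl
  have huv : u ++ v ∈ ({u, v} : Language A)∗ := by
    have : ([u, v] : List (List A)).flatten ∈ ({u, v} : Language A)∗ :=
      Language.join_mem_kstar (by intro y hy; simp at hy; rcases hy with h | h <;> simp [h, hu, hv])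
    simpa using this
  have hvu : v ++ u ∈ ({u, v} : Language A)∗ := by
    have : ([v, u] : List (List A)).flatten ∈ ({u, v} : Language A)∗ :=
      Language.join_mem_kstar (by intro y hy; simp at hy; rcases hy with h | h <;> simp [h, hu, hv])
    simpa using this
  obtain ⟨n₁, h₁⟩ := hmem _ huv
  obtain ⟨n₂, h₂⟩ := hmem _ hvu
  have hlen : (p' ++ (u ++ v) ++ s').length = (p' ++ (v ++ u) ++ s').length := by
    simp [List.length_append]; omega
  have hwlen : (wpow α n₁).length = (wpow α n₂).length := by
    have := hlen
    rw [h₁, h₂] at this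
    simp [List.length_append] at this
    omega
  have hwp : wpow α n₁ = wpow α n₂ := by
    rw [wpow_length, wpow_length] at hwlen
    rcases Nat.eq_zero_or_pos α.length with hz | hpos
    · have hα : α = [] := List.eq_nil_of_length_eq_zero hz
      subst hα
      rw [wpow_nil, wpow_nil]
    · have : n₁ = n₂ := Nat.eq_of_mul_eq_mul_right hpos hwlen
      rw [this]
  have heq : p' ++ (u ++ v) ++ s' = p' ++ (v ++ u) ++ s' := by
    rw [h₁, h₂, hwp]
  have hcomm : u ++ v = v ++ u := by
    have h3 := List.append_cancel_right heq
    exact List.append_cancel_left h3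
  exact comm_pow (u.length + v.length) u v le_rfl hcomm
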